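/- For every ξ = (ξ₁,ξ₂) ∈ ℝ²∖{0}, the 3×3 complex matrix k₀(ξ) := (i·𝕜/|ξ|)·[[0,0,−ξ₁],[0,0,−ξ₂],[ξ₁,ξ₂,0]] is Hermitian, satisfies k₀(ξ)³ = 𝕜²·k₀(ξ), and its set of eigenvalues is exactly {0, 𝕜, −𝕜}. (The principal symbol of the elastic Neumann–Poincaré operator has eigenvalues 0, ±𝕜 independent of the point and covector; in particular the NP operator is polynomially compact with polynomial p(ω) = ω(ω² − 𝕜²).) -/

import Mathlib

/-- The principal symbol `k₀(ξ)` of the elastic Neumann–Poincaré operator. -/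
noncomputable def npPrincipalSymbol (lam mu : ℝ) (ξ : Fin 2 → ℝ) :
    Matrix (Fin 3) (Fin 3) ℂ :=
  ((Complex.I * ((mu / (2 * (lam + 2 * mu)) : ℝ) : ℂ)) /
      ((Real.sqrt (ξ 0 ^ 2 + ξ 1 ^ 2) : ℝ) : ℂ)) •
    !![0, 0, -((ξ 0 : ℝ) : ℂ);
       0, 0, -((ξ 1 : ℝ) : ℂ);
       ((ξ 0 : ℝ) : ℂ), ((ξ 1 : ℝ) : ℂ), 0]

/-- The cube identity for the antisymmetric building block of the symbol. -/
theorem np_cube_aux (a b : ℂ) :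
    (!![0, 0, -a; 0, 0, -b; a, b, 0] : Matrix (Fin 3) (Fin 3) ℂ) ^ 3 =
      (-(a ^ 2 + b ^ 2)) • !![0, 0, -a; 0, 0, -b; a, b, 0] := by
  ext i j
  rw [pow_succ, pow_two]
  fin_cases i <;> fin_cases j <;>
    simp [Matrix.mul_apply, Fin.sum_univ_three, Matrix.smul_apply, smul_eq_mul]
  all_goals try ring
  all_goals exact Or.inl trivial

/-- For every `ξ ≠ 0`, the principal symbol `k₀(ξ)` of the elastic NP operator is
Hermitian, satisfies `k₀(ξ)³ = 𝕜²·k₀(ξ)` with `𝕜 = μ/(2(λ+2μ))`, and its set of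
eigenvalues is exactly `{0, 𝕜, −𝕜}`. -/
theorem np_principal_symbol_spectrum
    (lam mu : ℝ) (hmu : 0 < mu) (hlam2mu : 0 < lam + 2 * mu)
    (ξ : Fin 2 → ℝ) (hξ : ξ ≠ 0) :
    (npPrincipalSymbol lam mu ξ).IsHermitian ∧
    (npPrincipalSymbol lam mu ξ) ^ 3 =
      (((mu / (2 * (lam + 2 * mu)) : ℝ) : ℂ)) ^ 2 • npPrincipalSymbol lam mu ξ ∧
    spectrum ℂ (npPrincipalSymbol lam mu ξ) =
      {0, ((mu / (2 * (lam + 2 * mu)) : ℝ) : ℂ), -((mu / (2 * (lam + 2 * mu)) : ℝ) : ℂ)} := by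
  have h0 : ξ 0 ≠ 0 ∨ ξ 1 ≠ 0 := by
    by_contra h
    push_neg at h
    exact hξ (funext fun i => by fin_cases i <;> simp [h.1, h.2])
  have hs : (0:ℝ) < ξ 0 ^ 2 + ξ 1 ^ 2 := by rcases h0 with h | h <;> positivity
  have hr : (0:ℝ) < Real.sqrt (ξ 0 ^ 2 + ξ 1 ^ 2) := Real.sqrt_pos.mpr hs
  have hr2 : Real.sqrt (ξ 0 ^ 2 + ξ 1 ^ 2) ^ 2 = ξ 0 ^ 2 + ξ 1 ^ 2 := Real.sq_sqrt hs.le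
  set a : ℂ := ((ξ 0 : ℝ) : ℂ) with hadef
  set b : ℂ := ((ξ 1 : ℝ) : ℂ) with hbdef
  set k : ℂ := ((mu / (2 * (lam + 2 * mu)) : ℝ) : ℂ) with hkdef
  set r : ℂ := ((Real.sqrt (ξ 0 ^ 2 + ξ 1 ^ 2) : ℝ) : ℂ) with hrdef
  have hrC : r ≠ 0 := by
    rw [hrdef]; exact_mod_cast hr.ne'
  have hrC2 : r ^ 2 = a ^ 2 + b ^ 2 := by
    rw [hrdef, hadef, hbdef]; exact_mod_cast congrArg Complex.ofReal hr2
  have hk : (0:ℝ) < mu / (2 * (lam + 2 * mu)) := by positivity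
  have hkC : k ≠ 0 := by rw [hkdef]; exact_mod_cast hk.ne'
  set c : ℂ := Complex.I * k / r with hcdef
  have hA : npPrincipalSymbol lam mu ξ = c • !![0, 0, -a; 0, 0, -b; a, b, 0] := rfl
  have hc2 : c ^ 2 * (a ^ 2 + b ^ 2) = -k ^ 2 := by
    rw [← hrC2, hcdef, div_pow, div_mul_cancel₀ _ (pow_ne_zero 2 hrC), mul_pow,
      Complex.I_sq]
    ring
  refine ⟨?_, ?_, ?_⟩
  · unfold npPrincipalSymbol Matrix.IsHermitian
    ext i j
    fin_cases i <;> fin_cases j <;>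
      simp [Matrix.conjTranspose_apply, Complex.ext_iff, div_eq_mul_inv] <;> ring
  · rw [hA, smul_pow, np_cube_aux, smul_smul, smul_smul]
    congr 1
    linear_combination (-c) * hc2
  · have hdet : ∀ x : ℂ,
        (algebraMap ℂ (Matrix (Fin 3) (Fin 3) ℂ) x - npPrincipalSymbol lam mu ξ).det
          = x * (x - k) * (x + k) := by
      intro x
      rw [hA]
      simp only [Matrix.det_fin_three, Matrix.sub_apply, Matrix.algebraMap_matrix_apply,
        Matrix.smul_apply, Matrix.cons_val', Matrix.cons_val_zero, Matrix.cons_val_one,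
        Matrix.head_cons, Matrix.empty_val', Matrix.cons_val_fin_one, Matrix.head_fin_const,
        Matrix.cons_val_two, Matrix.tail_cons, Fin.ext_iff]
      norm_num
      simp only [Matrix.cons_val]
      rw [hcdef] at hc2
      linear_combination x * hc2
    ext x
    simp only [spectrum.mem_iff, Matrix.isUnit_iff_isUnit_det, hdet x, isUnit_iff_ne_zero,
      ne_eq, not_not, mul_eq_zero, sub_eq_zero, add_eq_zero_iff_eq_neg,
      Set.mem_insert_iff, Set.mem_singleton_iff, or_assoc]
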